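/- Let K be a field, n ≥ 1, and let N, A ∈ Mat_n(K) with rank N = n − 1. If det(A + tN), viewed as a formal polynomial in K[t], is a non-zero constant, then the matrix pencil A + tN is equivalent to the pencil I_n + tJ, where J = (δ_{i,j−1}) is the nilpotent Jordan block; i.e., there exist P, Q ∈ GL_n(K) with P(A + tN)Q = I_n + tJ as pencils (PAQ = I_n and PNQ = J). -/

import Mathlib

open Matrix Polynomial LinearMap Module

lemma aux_ker_comp {K V : Type*} [Field K] [AddCommGroup V] [Module K V]
    [FiniteDimensional K V] (f g : V →ₗ[K] V) :
    finrank K (LinearMap.ker (f ∘ₗ g)) ≤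
      finrank K (LinearMap.ker g) + finrank K (LinearMap.ker f) := by
  set W := LinearMap.ker (f ∘ₗ g)
  have hmaps : ∀ x ∈ W, g x ∈ LinearMap.ker f := by
    intro x hx
    simpa [W, LinearMap.mem_ker] using hx
  set h : W →ₗ[K] LinearMap.ker f := g.restrict hmaps with hh
  have hrn := h.finrank_range_add_finrank_ker
  have h1 : finrank K (LinearMap.range h) ≤ finrank K (LinearMap.ker f) :=
    (LinearMap.range h).finrank_le
  have h2 : finrank K (LinearMap.ker h) ≤ finrank K (LinearMap.ker g) := by
    rw [← Submodule.finrank_map_subtype_eq]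
    apply Submodule.finrank_mono
    rintro x ⟨y, hy, rfl⟩
    have : h y = 0 := hy
    have : g (y : V) = 0 := congrArg Subtype.val this
    simpa [LinearMap.mem_ker] using this
  omega

lemma aux_nilp {K : Type*} [Field K] {n : ℕ} (M : Matrix (Fin n) (Fin n) K)
    (h : (1 + (X : K[X]) • M.map C).det = 1) : M ^ n = 0 := by
  have h1 : (-M).charpolyRev = 1 := by
    rw [Matrix.charpolyRev]
    rw [show (1 : Matrix (Fin n) (Fin n) K[X]) - (X : K[X]) • (-M).map C
        = 1 + (X : K[X]) • M.map C by
      ext i j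
      simp [Matrix.sub_apply, Matrix.add_apply, Matrix.smul_apply, Matrix.map_apply,
        mul_neg, sub_neg_eq_add]]
    exact h
  have h2 : (-M).charpoly.reverse = 1 := by rw [Matrix.reverse_charpoly, h1]
  have hdeg : (-M).charpoly.natDegree = n := by
    simp [Matrix.charpoly_natDegree_eq_dim]
  have h3 : (-M).charpoly = X ^ n := by
    ext k
    rw [Polynomial.coeff_X_pow]
    rcases le_or_gt k n with hk | hk
    · have : (-M).charpoly.reverse.coeff (n - k) = (-M).charpoly.coeff k := by
        rw [Polynomial.coeff_reverse, hdeg, Polynomial.revAt_le (by omega)]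
        congr 1
        omega
      rw [← this, h2, Polynomial.coeff_one]
      by_cases hkn : k = n
      · simp [hkn]
      · rw [if_neg hkn, if_neg (by omega)]
    · rw [Polynomial.coeff_eq_zero_of_natDegree_lt (by omega)]
      rw [if_neg (by omega)]
  have h4 : (-M) ^ n = 0 := by
    have := Matrix.aeval_self_charpoly (-M)
    rwa [h3, map_pow, Polynomial.aeval_X] at this
  rcases Nat.even_or_odd n with he | ho
  · rwa [he.neg_pow] at h4
  · rw [ho.neg_pow, neg_eq_zero] at h4; exact h4

lemma aux_li {K : Type*} [Field K] {n : ℕ} (M : Matrix (Fin n) (Fin n) K)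
    (hMn : M ^ n = 0) (v : Fin n → K) (hv : (M ^ (n - 1)) *ᵥ v ≠ 0) :
    LinearIndependent K (fun i : Fin n => (M ^ (i : ℕ)) *ᵥ v) := by
  rw [Fintype.linearIndependent_iff]
  intro g hg
  have key : ∀ m : ℕ, ∀ i : Fin n, (i : ℕ) = m → g i = 0 := by
    intro m
    induction m using Nat.strong_induction_on with
    | _ m ih =>
      intro i hi
      have him : m ≤ n - 1 := by have := i.isLt; omega
      have happ := congrArg ((M ^ (n - 1 - m)).mulVecLin) hg
      rw [map_sum, map_zero] at happ
      simp only [Matrix.mulVecLin_apply, Matrix.mulVec_smul, Matrix.mulVec_mulVec,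
        ← pow_add] at happ
      rw [Finset.sum_eq_single i] at happ
      · have hexp : n - 1 - m + (i : ℕ) = n - 1 := by omega
        rw [hexp] at happ
        rcases smul_eq_zero.mp happ with h | h
        · exact h
        · exact absurd h hv
      · intro j _ hj
        rcases lt_or_gt_of_ne (fun h : (j : ℕ) = m => hj (Fin.ext (by omega))) with hlt | hgt
        · rw [ih _ hlt j rfl, zero_smul]
        · have : M ^ (n - 1 - m + (j : ℕ)) = 0 :=
            pow_eq_zero_of_le (by omega) hMn
          rw [this, Matrix.zero_mulVec, smul_zero]
      · intro h
        exact absurd (Finset.mem_univ i) h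
  intro i
  exact key (i : ℕ) i rfl

lemma aux_ker_pow {K : Type*} [Field K] {n : ℕ} (M : Matrix (Fin n) (Fin n) K)
    (h1 : finrank K (LinearMap.ker M.mulVecLin) ≤ 1) (k : ℕ) :
    finrank K (LinearMap.ker (M ^ k).mulVecLin) ≤ k := by
  induction k with
  | zero =>
      rw [pow_zero, Matrix.mulVecLin_one, LinearMap.ker_id]
      simp
  | succ k ih =>
      rw [pow_succ, Matrix.mulVecLin_mul]
      calc finrank K (LinearMap.ker ((M ^ k).mulVecLin ∘ₗ M.mulVecLin))
          ≤ finrank K (LinearMap.ker M.mulVecLin)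
              + finrank K (LinearMap.ker (M ^ k).mulVecLin) := aux_ker_comp _ _
        _ ≤ k + 1 := by omega

theorem stmt18 (K : Type*) [Field K] (n : ℕ) (hn : 1 ≤ n)
    (N A : Matrix (Fin n) (Fin n) K) (hN : N.rank = n - 1)
    (c : K) (hc : c ≠ 0)
    (hdet : (A.map Polynomial.C + (Polynomial.X : Polynomial K) • N.map Polynomial.C).det = Polynomial.C c) :
    ∃ P Q : Matrix (Fin n) (Fin n) K, IsUnit P ∧ IsUnit Q ∧
      P * A * Q = 1 ∧
      P * N * Q = Matrix.of fun i j : Fin n => if (j : ℕ) = (i : ℕ) + 1 then 1 else 0 := by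
  classical
  have hdetA : A.det = c := by
    have h0 := congrArg (Polynomial.eval 0) hdet
    rw [Polynomial.eval_C, ← Polynomial.coe_evalRingHom, RingHom.map_det] at h0
    rw [← h0]
    congr 1
    ext i j
    simp [Matrix.map_apply, Matrix.add_apply, Matrix.smul_apply]
  have hAdet : IsUnit A.det := hdetA ▸ hc.isUnit
  set M := A⁻¹ * N with hM
  have hAM : A * M = N := by
    rw [hM, ← mul_assoc, Matrix.mul_nonsing_inv A hAdet, one_mul]
  have hfac : (A.map C) * (1 + (X : K[X]) • M.map C) = A.map C + (X : K[X]) • N.map C := by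
    rw [mul_add, mul_one, Matrix.mul_smul, ← Matrix.map_mul, hAM]
  have hdetAC : (A.map (C : K →+* K[X])).det = C c := by
    have h2 := RingHom.map_det (C : K →+* K[X]) A
    rw [RingHom.mapMatrix_apply] at h2
    rw [← h2, hdetA]
  have h1 : (1 + (X : K[X]) • M.map C).det = 1 := by
    have := congrArg Matrix.det hfac
    rw [Matrix.det_mul, hdetAC, hdet] at this
    have hCc : (C c : K[X]) ≠ 0 := fun h => hc (by simpa using congrArg (Polynomial.eval 0) h)
    replace this := mul_left_cancel₀ hCc (this.trans (mul_one (C c)).symm)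
    exact this
  have hMn : M ^ n = 0 := aux_nilp M h1
  have hrank : M.rank = n - 1 := by
    rw [hM, Matrix.rank_mul_eq_right_of_isUnit_det A⁻¹ N (A.isUnit_nonsing_inv_det hAdet)]
    exact hN
  have hrankdef : M.rank = finrank K (LinearMap.range M.mulVecLin) := rfl
  have hrn := M.mulVecLin.finrank_range_add_finrank_ker
  rw [Module.finrank_fin_fun] at hrn
  have hker : finrank K (LinearMap.ker M.mulVecLin) ≤ 1 := by omega
  have hv : ∃ v : Fin n → K, (M ^ (n - 1)) *ᵥ v ≠ 0 := by
    by_contra hcon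
    push_neg at hcon
    have htop : LinearMap.ker (M ^ (n - 1)).mulVecLin = ⊤ := by
      ext x
      simp [LinearMap.mem_ker, Matrix.mulVecLin_apply, hcon]
    have h2 := aux_ker_pow M hker (n - 1)
    rw [htop, finrank_top, Module.finrank_fin_fun] at h2
    omega
  obtain ⟨v, hv⟩ := hv
  have hli := aux_li M hMn v hv
  have hli2 : LinearIndependent K ((fun i : Fin n => (M ^ (i : ℕ)) *ᵥ v) ∘ Fin.rev) :=
    hli.comp Fin.rev Fin.rev_injective
  haveI : Nonempty (Fin n) := ⟨⟨0, by omega⟩⟩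
  have hcard : Fintype.card (Fin n) = finrank K (Fin n → K) := by
    rw [Module.finrank_fin_fun, Fintype.card_fin]
  let b : Basis (Fin n) K (Fin n → K) := basisOfLinearIndependentOfCardEqFinrank hli2 hcard
  have hb : ⇑b = (fun i : Fin n => (M ^ (i : ℕ)) *ᵥ v) ∘ Fin.rev :=
    coe_basisOfLinearIndependentOfCardEqFinrank hli2 hcard
  set e : Basis (Fin n) K (Fin n → K) := Pi.basisFun K (Fin n) with he
  set Q : Matrix (Fin n) (Fin n) K := e.toMatrix ⇑b with hQdef
  have hQu : IsUnit Q :=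
    ⟨⟨Q, b.toMatrix ⇑e, Basis.toMatrix_mul_toMatrix_flip e b,
      Basis.toMatrix_mul_toMatrix_flip b e⟩, rfl⟩
  have hQapp : ∀ i j : Fin n, Q i j = ((M ^ (n - 1 - (j : ℕ))) *ᵥ v) i := by
    intro i j
    rw [hQdef, Basis.toMatrix_apply, he, Pi.basisFun_repr, hb]
    simp only [Function.comp_apply, Fin.val_rev]
    congr 2
    omega
  set J : Matrix (Fin n) (Fin n) K :=
    Matrix.of fun i j : Fin n => if (j : ℕ) = (i : ℕ) + 1 then 1 else 0 with hJ
  have hMQ : M * Q = Q * J := by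
    ext i j
    have hlhs : (M * Q) i j = ((M * M ^ (n - 1 - (j : ℕ))) *ᵥ v) i := by
      rw [← Matrix.mulVec_mulVec]
      simp only [Matrix.mul_apply, Matrix.mulVec, dotProduct]
      refine Finset.sum_congr rfl fun k _ => ?_
      rw [hQapp k j]
      rfl
    rw [hlhs]
    by_cases hj0 : (j : ℕ) = 0
    · have : M * M ^ (n - 1 - (j : ℕ)) = 0 := by
        rw [hj0, Nat.sub_zero, ← pow_succ', ]
        exact pow_eq_zero_of_le (by omega) hMn
      rw [this, Matrix.zero_mulVec]
      rw [Matrix.mul_apply]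
      apply (Finset.sum_eq_zero ?_).symm
      intro k _
      rw [hJ]
      simp only [Matrix.of_apply]
      rw [if_neg (by omega), mul_zero]
    · have hjn : 1 ≤ (j : ℕ) ∧ (j : ℕ) ≤ n - 1 := ⟨by omega, by have := j.isLt; omega⟩
      set k0 : Fin n := ⟨(j : ℕ) - 1, by omega⟩ with hk0
      have hrhs : (Q * J) i j = Q i k0 := by
        rw [Matrix.mul_apply, Finset.sum_eq_single k0]
        · rw [hJ]
          simp only [Matrix.of_apply, hk0]
          rw [if_pos (show (j : ℕ) = (j : ℕ) - 1 + 1 by omega), mul_one]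
        · intro k _ hk
          rw [hJ]
          simp only [Matrix.of_apply]
          rw [if_neg, mul_zero]
          intro hkj
          apply hk
          exact Fin.ext (show (k : ℕ) = (j : ℕ) - 1 by omega)
        · intro h; exact absurd (Finset.mem_univ k0) h
      rw [hrhs, hQapp i k0]
      have : M * M ^ (n - 1 - (j : ℕ)) = M ^ (n - 1 - ((k0 : ℕ))) := by
        rw [← _root_.pow_succ' M (n - 1 - (j : ℕ))]
        congr 1
        show n - 1 - (j : ℕ) + 1 = n - 1 - ((j : ℕ) - 1)
        omega
      rw [this]
  have hQdet : IsUnit Q.det := (Matrix.isUnit_iff_isUnit_det Q).mp hQu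
  refine ⟨Q⁻¹ * A⁻¹, Q, ?_, hQu, ?_, ?_⟩
  · exact (Matrix.isUnit_nonsing_inv_iff.mpr hQu).mul
      (Matrix.isUnit_nonsing_inv_iff.mpr ((Matrix.isUnit_iff_isUnit_det A).mpr hAdet))
  · rw [mul_assoc Q⁻¹ A⁻¹ A, Matrix.nonsing_inv_mul A hAdet, mul_one,
      Matrix.nonsing_inv_mul Q hQdet]
  · calc Q⁻¹ * A⁻¹ * N * Q = Q⁻¹ * (M * Q) := by rw [hM]; simp only [mul_assoc]
      _ = Q⁻¹ * (Q * J) := by rw [hMQ]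
      _ = J := by rw [← mul_assoc, Matrix.nonsing_inv_mul Q hQdet, one_mul]
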